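/- Let A and B be disjoint sets with |A| = |B| = n, and let ≺ be any linear order on A ∪ B. Then there exist subsets A' of one of the two parts and B' of the other part with |A'| = |B'| = ⌈n/2⌉ such that every element of A' precedes (in ≺) every element of B'. -/

import Mathlib

namespace MixedPaper

lemma card_filter_lt_orderIsoOfFin (T : Finset ℕ) {m : ℕ} (h : T.card = m) (i : Fin m) :
    (T.filter (fun v => v < (T.orderIsoOfFin h i : ℕ))).card = i := by
  classical
  have heq : T.filter (fun v => v < (T.orderIsoOfFin h i : ℕ)) =
      (Finset.univ.filter fun j : Fin m => j < i).image
        (fun j => (T.orderIsoOfFin h j : ℕ)) := by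
    ext v
    simp only [Finset.mem_filter, Finset.mem_image, Finset.mem_univ, true_and]
    constructor
    · rintro ⟨hv, hlt⟩
      refine ⟨(T.orderIsoOfFin h).symm ⟨v, hv⟩, ?_, by simp⟩
      rw [← OrderIso.lt_iff_lt (T.orderIsoOfFin h)]
      rw [OrderIso.apply_symm_apply]; exact hlt
    · rintro ⟨j, hj, rfl⟩
      exact ⟨(T.orderIsoOfFin h j).2,
        by exact_mod_cast (OrderIso.lt_iff_lt (T.orderIsoOfFin h)).2 hj⟩
  rw [heq, Finset.card_image_of_injective _
    (fun a b hab => (T.orderIsoOfFin h).injective (Subtype.ext hab))]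
  rw [show (Finset.univ.filter fun j : Fin m => j < i) = Finset.Iio i by ext j; simp]
  exact Fin.card_Iio i

theorem exists_separated_halves {α : Type*} [DecidableEq α] (n : ℕ) (A B : Finset α)
    (hd : Disjoint A B) (hA : A.card = n) (hB : B.card = n)
    (f : α → ℕ) (hf : Set.InjOn f (↑(A ∪ B) : Set α)) :
    ∃ A' B' : Finset α,
      ((A' ⊆ A ∧ B' ⊆ B) ∨ (A' ⊆ B ∧ B' ⊆ A)) ∧
      A'.card = (n + 1) / 2 ∧ B'.card = (n + 1) / 2 ∧
      ∀ a ∈ A', ∀ b ∈ B', f a < f b := by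
  classical
  rcases Nat.eq_zero_or_pos n with rfl | hn
  · exact ⟨∅, ∅, Or.inl ⟨Finset.empty_subset _, Finset.empty_subset _⟩, rfl, rfl, by simp⟩
  set k := (n + 1) / 2 with hk
  set S := A ∪ B with hS
  have hScard : S.card = 2 * n := by
    rw [hS, Finset.card_union_of_disjoint hd, hA, hB]; ring
  set T := S.image f with hT
  have hTcard : T.card = 2 * n := by
    rw [hT, Finset.card_image_of_injOn hf, hScard]
  have hnlt : n < 2 * n := by omega
  set t : ℕ := (T.orderIsoOfFin hTcard ⟨n, hnlt⟩ : ℕ) with ht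
  set low := S.filter (fun x => f x < t) with hlow
  set high := S.filter (fun x => ¬ f x < t) with hhigh
  -- low has card n
  have himg : low.image f = T.filter (fun v => v < t) := by
    ext v
    simp only [hlow, Finset.mem_image, Finset.mem_filter, hT]
    constructor
    · rintro ⟨x, ⟨hxS, hxlt⟩, rfl⟩
      exact ⟨⟨x, hxS, rfl⟩, hxlt⟩
    · rintro ⟨⟨x, hxS, rfl⟩, hvlt⟩
      exact ⟨x, ⟨hxS, hvlt⟩, rfl⟩
  have hlowcard : low.card = n := by
    have h1 : low.card = (low.image f).card := by
      rw [Finset.card_image_of_injOn (hf.mono (by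
        intro x hx; exact (Finset.filter_subset _ _) hx))]
    rw [h1, himg, ht]
    exact card_filter_lt_orderIsoOfFin T hTcard ⟨n, hnlt⟩
  have hhighcard : high.card = n := by
    have h2 : low.card + high.card = S.card := by
      rw [hlow, hhigh]
      exact Finset.card_filter_add_card_filter_not _
    omega
  -- split counts
  have hfsplit : ∀ p : α → Prop, ∀ (_ : DecidablePred p),
      (A.filter p).card + (B.filter p).card = (S.filter p).card := by
    intro p _
    rw [hS, Finset.filter_union, Finset.card_union_of_disjoint
      (hd.mono (Finset.filter_subset _ _) (Finset.filter_subset _ _))]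
  have haL := hfsplit (fun x => f x < t) inferInstance
  have haH := hfsplit (fun x => ¬ f x < t) inferInstance
  rw [← hlow] at haL
  rw [← hhigh] at haH
  have hAsplit : (A.filter (fun x => f x < t)).card
      + (A.filter (fun x => ¬ f x < t)).card = n := by
    rw [Finset.card_filter_add_card_filter_not, hA]
  have hBsplit : (B.filter (fun x => f x < t)).card
      + (B.filter (fun x => ¬ f x < t)).card = n := by
    rw [Finset.card_filter_add_card_filter_not, hB]
  set aL := (A.filter (fun x => f x < t)).card
  set bL := (B.filter (fun x => f x < t)).card
  set aH := (A.filter (fun x => ¬ f x < t)).card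
  set bH := (B.filter (fun x => ¬ f x < t)).card
  rw [hlowcard] at haL
  rw [hhighcard] at haH
  have hsep : ∀ {X Y : Finset α}, X ⊆ low → Y ⊆ high →
      ∀ a ∈ X, ∀ b ∈ Y, f a < f b := by
    intro X Y hX hY a ha b hb
    have h1 : f a < t := (Finset.mem_filter.mp (hX ha)).2
    have h2 : ¬ f b < t := (Finset.mem_filter.mp (hY hb)).2
    omega
  by_cases hcase : k ≤ aL
  · -- A' from A∩low, B' from B∩high; bH = n - bL = aL ≥ k
    obtain ⟨A', hA'sub, hA'card⟩ := Finset.exists_subset_card_eq hcase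
    have hbH : k ≤ bH := by omega
    obtain ⟨B', hB'sub, hB'card⟩ := Finset.exists_subset_card_eq hbH
    refine ⟨A', B', Or.inl ⟨hA'sub.trans (Finset.filter_subset _ _),
      hB'sub.trans (Finset.filter_subset _ _)⟩, hA'card, hB'card, ?_⟩
    exact hsep (hA'sub.trans (by rw [hlow, hS]; exact
      Finset.filter_subset_filter _ Finset.subset_union_left))
      (hB'sub.trans (by rw [hhigh, hS]; exact
      Finset.filter_subset_filter _ Finset.subset_union_right))
  · have hbL : k ≤ bL := by omega
    have haH2 : k ≤ aH := by omega
    obtain ⟨A', hA'sub, hA'card⟩ := Finset.exists_subset_card_eq hbL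
    obtain ⟨B', hB'sub, hB'card⟩ := Finset.exists_subset_card_eq haH2
    refine ⟨A', B', Or.inr ⟨hA'sub.trans (Finset.filter_subset _ _),
      hB'sub.trans (Finset.filter_subset _ _)⟩, hA'card, hB'card, ?_⟩
    exact hsep (hA'sub.trans (by rw [hlow, hS]; exact
      Finset.filter_subset_filter _ Finset.subset_union_right))
      (hB'sub.trans (by rw [hhigh, hS]; exact
      Finset.filter_subset_filter _ Finset.subset_union_left))

end MixedPaper
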